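/- Let M be a matroid with non-negative weights w', let B be its maximum-weight basis, and for an independent set S let R(S) denote the maximum-weight subset of B completing S to a basis. Then for any disjoint sets A, V with A ∪ V independent: Σ_{x ∈ V} [w'(R(A)) - w'(R(A ∪ {x}))] ≤ w'(R(A)). -/

import Mathlib

open Set

namespace Stmt9Aux

variable {α : Type*} {M : Matroid α} {B1 B2 : Set α}

/-- Symmetric basis exchange for matroids with finite ground set. -/
lemma symExchange [M.Finite] (h1 : M.IsBase B1) (h2 : M.IsBase B2) {y : α}
    (hy1 : y ∈ B2) (hy2 : y ∉ B1) :
    ∃ e ∈ B1, e ∉ B2 ∧ M.IsBase (insert y (B1 \ {e})) ∧ M.IsBase (insert e (B2 \ {y})) := by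
  classical
  have hB1fin : B1.Finite := M.ground_finite.subset h1.subset_ground
  have hyE : y ∈ M.E := h2.subset_ground hy1
  -- candidates: subsets J of B1 with y ∈ closure J
  set cand : Finset (Finset α) :=
    hB1fin.toFinset.powerset.filter (fun J => y ∈ M.closure ↑J) with hcand
  have hcne : cand.Nonempty := by
    refine ⟨hB1fin.toFinset, ?_⟩
    rw [hcand, Finset.mem_filter]
    refine ⟨Finset.mem_powerset_self _, ?_⟩
    rw [Set.Finite.coe_toFinset, h1.closure_eq]
    exact hyE
  obtain ⟨J, hJmem, hJmin⟩ := Finset.exists_min_image cand (fun J => J.card) hcne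
  rw [hcand, Finset.mem_filter, Finset.mem_powerset] at hJmem
  have hJB1 : (↑J : Set α) ⊆ B1 := by
    intro x hx
    have := hJmem.1 hx
    rwa [Set.Finite.mem_toFinset] at this
  have hyJ : y ∈ M.closure ↑J := hJmem.2
  -- minimality: removing any element of J loses y from the closure
  have hmin : ∀ e ∈ J, y ∉ M.closure ↑(J.erase e) := by
    intro e he hcon
    have hmem : J.erase e ∈ cand := by
      rw [hcand, Finset.mem_filter, Finset.mem_powerset]
      exact ⟨(Finset.erase_subset _ _).trans hJmem.1, hcon⟩
    have := hJmin _ hmem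
    have hlt := Finset.card_erase_lt_of_mem he
    omega
  -- choose e ∈ J outside closure (B2 \ {y})
  have hkey : ∃ e ∈ J, e ∉ M.closure (B2 \ {y}) := by
    by_contra hcon
    push_neg at hcon
    have hsub : (↑J : Set α) ⊆ M.closure (B2 \ {y}) := fun x hx => hcon x hx
    have := M.closure_subset_closure_of_subset_closure hsub
    exact (h2.indep.notMem_closure_diff_of_mem hy1) (this hyJ)
  obtain ⟨e, heJ, heCl⟩ := hkey
  have heB1 : e ∈ B1 := hJB1 heJ
  have heB2 : e ∉ B2 := by
    intro h
    have hey : e ≠ y := fun h' => hy2 (h' ▸ heB1)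
    exact heCl (M.subset_closure (B2 \ {y})
      (diff_subset.trans h2.subset_ground) ⟨h, hey⟩)
  -- base 2 : insert e (B2 \ {y})
  have hind2 : M.Indep (insert e (B2 \ {y})) := by
    refine ((h2.indep.subset diff_subset).insert_indep_iff_of_notMem
      (fun h => heB2 h.1)).mpr ⟨h1.subset_ground heB1, heCl⟩
  have hbase2 : M.IsBase (insert e (B2 \ {y})) := h2.exchange_isBase_of_indep heB2 hind2
  -- closure exchange
  have hJcoe : (↑J : Set α) = insert e ↑(J.erase e) := by
    rw [← Finset.coe_insert, Finset.insert_erase heJ]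
  have hyX : y ∉ M.closure ↑(J.erase e) := hmin e heJ
  have hyins : y ∈ M.closure (insert e ↑(J.erase e)) := by rwa [← hJcoe]
  have heCl2 : e ∈ M.closure (insert y ↑(J.erase e)) := Matroid.mem_closure_insert hyX hyins
  -- base 1 : insert y (B1 \ {e})
  have hyCl : y ∉ M.closure (B1 \ {e}) := by
    intro hy
    have hcc : M.closure (insert y (B1 \ {e})) = M.closure (B1 \ {e}) :=
      M.closure_insert_eq_of_mem_closure hy
    have hsub : insert y (↑(J.erase e) : Set α) ⊆ insert y (B1 \ {e}) := by
      refine insert_subset_insert ?_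
      intro x hx
      rw [Finset.mem_coe, Finset.mem_erase] at hx
      exact ⟨hJB1 hx.2, hx.1⟩
    have : e ∈ M.closure (B1 \ {e}) := hcc ▸ (M.closure_subset_closure hsub) heCl2
    exact h1.indep.notMem_closure_diff_of_mem heB1 this
  have hind1 : M.Indep (insert y (B1 \ {e})) :=
    ((h1.indep.subset diff_subset).insert_indep_iff_of_notMem
      (fun h => hy2 h.1)).mpr ⟨hyE, hyCl⟩
  exact ⟨e, heB1, heB2, h1.exchange_isBase_of_indep hy2 hind1, hbase2⟩

variable {w' : α → ℝ}

lemma wsum_nonneg (hw : ∀ e, 0 ≤ w' e) (S : Set α) : 0 ≤ ∑ᶠ e ∈ S, w' e := by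
  rw [finsum_mem_def]
  exact finsum_nonneg fun x => Set.indicator_nonneg (fun a _ => hw a) x

lemma wsum_split {S : Set α} (hS : S.Finite) {e : α} (he : e ∈ S) :
    ∑ᶠ x ∈ S, w' x = w' e + ∑ᶠ x ∈ S \ {e}, w' x := by
  rw [← finsum_mem_insert w' (by simp) (hS.subset diff_subset),
    Set.insert_diff_singleton, Set.insert_eq_of_mem he]

lemma wsum_mono (hw : ∀ e, 0 ≤ w' e) {S T : Set α} (hT : T.Finite) (hST : S ⊆ T) :
    ∑ᶠ x ∈ S, w' x ≤ ∑ᶠ x ∈ T, w' x := by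
  have hU : T = S ∪ (T \ S) := by rw [Set.union_diff_cancel hST]
  rw [hU, finsum_mem_union disjoint_sdiff_right (hT.subset hST) (hT.subset diff_subset)]
  have := wsum_nonneg hw (w' := w') (T \ S)
  linarith

lemma key {α : Type*} (M : Matroid α) [M.Finite] (w' : α → ℝ)
    (hw'nonneg : ∀ e, 0 ≤ w' e)
    (B : Set α) (hB : M.IsBase B)
    (R : Set α → Set α)
    (hR : ∀ S, M.Indep S →
      R S ⊆ B ∧ Disjoint (R S) S ∧ M.IsBase (S ∪ R S) ∧
      ∀ R', R' ⊆ B → Disjoint R' S → M.IsBase (S ∪ R') →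
        ∑ᶠ e ∈ R', w' e ≤ ∑ᶠ e ∈ R S, w' e)
    (A V₀ : Set α) (hdisj : Disjoint A V₀) (hAV : M.Indep (A ∪ V₀))
    (V : Set α) (hVfin : V.Finite) :
    V ⊆ V₀ → ∀ RV : Set α, RV ⊆ R A → Disjoint RV V → M.IsBase (A ∪ V ∪ RV) →
      ∑ᶠ x ∈ V, ((∑ᶠ e ∈ R A, w' e) - ∑ᶠ e ∈ R (A ∪ {x}), w' e) ≤ ∑ᶠ e ∈ R A \ RV, w' e := by
  classical
  have hRA := hR A (hAV.subset subset_union_left)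
  have hRAfin : (R A).Finite := M.ground_finite.subset (hRA.1.trans hB.subset_ground)
  induction V, hVfin using Set.Finite.induction_on with
  | empty =>
      intro _ RV _ _ _
      rw [finsum_mem_empty]
      exact wsum_nonneg hw'nonneg _
  | @insert y s hys hsfin ih =>
      intro hsub RV hRVsub hRVdisj hbase
      have hyV₀ : y ∈ V₀ := hsub (mem_insert y s)
      have hyA : y ∉ A := fun h => (hdisj.ne_of_mem h hyV₀) rfl
      have hyRV : y ∉ RV := fun h => (hRVdisj.ne_of_mem h (mem_insert y s)) rfl
      have hAy : M.Indep (A ∪ {y}) := hAV.subset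
        (union_subset_union_right A (by simpa using hyV₀))
      -- produce the exchange element e
      have hmain : ∃ e, e ∈ R A ∧ e ∉ RV ∧ e ∉ s ∧ y ∉ R A \ {e} ∧
          M.IsBase ((A ∪ {y}) ∪ (R A \ {e})) ∧ M.IsBase (A ∪ s ∪ insert e RV) := by
        by_cases hyRA : y ∈ R A
        · refine ⟨y, hyRA, hyRV, hys, by simp, ?_, ?_⟩
          · have hset : (A ∪ {y}) ∪ (R A \ {y}) = A ∪ R A := by
              rw [union_assoc, singleton_union, insert_diff_singleton,
                insert_eq_of_mem hyRA]
            rw [hset]; exact hRA.2.2.1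
          · have hset : A ∪ s ∪ insert y RV = A ∪ insert y s ∪ RV := by
              ext x
              simp only [mem_union, mem_insert_iff]
              tauto
            rw [hset]; exact hbase
        · have hyB1 : y ∉ A ∪ R A := by
            intro h; rcases h with h | h
            · exact hyA h
            · exact hyRA h
          obtain ⟨e, heB1, heB2, hb1, hb2⟩ := symExchange hRA.2.2.1 hbase
            (show y ∈ A ∪ insert y s ∪ RV by
              exact Or.inl (Or.inr (mem_insert y s))) hyB1
          have heA : e ∉ A := fun h => heB2 (Or.inl (Or.inl h))
          have heRA : e ∈ R A := heB1.resolve_left heA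
          have heRV : e ∉ RV := fun h => heB2 (Or.inr h)
          have hes : e ∉ s := fun h => heB2 (Or.inl (Or.inr (mem_insert_of_mem y h)))
          have hey : e ≠ y := fun h => heB2 (Or.inl (Or.inr (h ▸ mem_insert y s)))
          refine ⟨e, heRA, heRV, hes, fun h => hyRA h.1, ?_, ?_⟩
          · have hset : insert y ((A ∪ R A) \ {e}) = (A ∪ {y}) ∪ (R A \ {e}) := by
              ext x
              by_cases hxe : x = e
              · subst hxe
                simp [hey.symm, heA]
              · simp only [mem_insert_iff, mem_union, mem_diff, mem_singleton_iff, hxe]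
                tauto
            rwa [hset] at hb1
          · have hset : insert e ((A ∪ insert y s ∪ RV) \ {y}) = A ∪ s ∪ insert e RV := by
              ext x
              by_cases hxy : x = y
              · subst hxy
                simp [hey, hyA, hys, hyRV]
              · simp only [mem_insert_iff, mem_union, mem_diff, mem_singleton_iff, hxy]
                tauto
            rwa [hset] at hb2
      obtain ⟨e, heRA, heRV, hes, hyRA', hb1, hb2⟩ := hmain
      -- marginal loss of y is at most w' e
      have hRAy := hR (A ∪ {y}) hAy
      have hdisj1 : Disjoint (R A \ {e}) (A ∪ {y}) := by
        rw [disjoint_union_right]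
        exact ⟨(hRA.2.1.mono_left diff_subset),
          disjoint_singleton_right.mpr (fun h => hyRA' h)⟩
      have hle1 : ∑ᶠ x ∈ R A \ {e}, w' x ≤ ∑ᶠ x ∈ R (A ∪ {y}), w' x :=
        hRAy.2.2.2 (R A \ {e}) (diff_subset.trans hRA.1) hdisj1 hb1
      have hsplit1 : ∑ᶠ x ∈ R A, w' x = w' e + ∑ᶠ x ∈ R A \ {e}, w' x :=
        wsum_split hRAfin heRA
      -- inductive step
      have hIH := ih (subset_insert y s |>.trans hsub) (insert e RV)
        (insert_subset heRA hRVsub)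
        (by
          rw [insert_eq, disjoint_union_left]
          exact ⟨disjoint_singleton_left.mpr hes, hRVdisj.mono_right (subset_insert y s)⟩)
        hb2
      -- split the budget
      have heRAV : e ∈ R A \ RV := ⟨heRA, heRV⟩
      have hsplit2 : ∑ᶠ x ∈ R A \ RV, w' x = w' e + ∑ᶠ x ∈ R A \ insert e RV, w' x := by
        rw [wsum_split (hRAfin.subset diff_subset) heRAV]
        congr 2
        rw [diff_diff, union_comm, ← insert_eq]
      rw [finsum_mem_insert _ hys hsfin, hsplit2]
      have hfy : (∑ᶠ e ∈ R A, w' e) - ∑ᶠ e ∈ R (A ∪ {y}), w' e ≤ w' e := by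
        rw [hsplit1]; linarith
      linarith

end Stmt9Aux

open scoped BigOperators
open Stmt9Aux Set

/-- For disjoint sets `A, V` with `A ∪ V` independent, the marginal losses of the max-weight
completion `R(·)` satisfy `Σ_{x ∈ V} [w'(R(A)) - w'(R(A ∪ {x}))] ≤ w'(R(A))`. -/
theorem stmt9 {α : Type*} (M : Matroid α) [M.Finite] (w' : α → ℝ)
    (hw'nonneg : ∀ e, 0 ≤ w' e)
    (B : Set α) (hB : M.IsBase B)
    (hBmax : ∀ B', M.IsBase B' → ∑ᶠ e ∈ B', w' e ≤ ∑ᶠ e ∈ B, w' e)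
    (R : Set α → Set α)
    (hR : ∀ S, M.Indep S →
      R S ⊆ B ∧ Disjoint (R S) S ∧ M.IsBase (S ∪ R S) ∧
      ∀ R', R' ⊆ B → Disjoint R' S → M.IsBase (S ∪ R') →
        ∑ᶠ e ∈ R', w' e ≤ ∑ᶠ e ∈ R S, w' e)
    (A V : Set α) (hdisj : Disjoint A V) (hAV : M.Indep (A ∪ V)) :
    ∑ᶠ x ∈ V, ((∑ᶠ e ∈ R A, w' e) - ∑ᶠ e ∈ R (A ∪ {x}), w' e) ≤ ∑ᶠ e ∈ R A, w' e := by
  have hRA := hR A (hAV.subset subset_union_left)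
  have hRAfin : (R A).Finite := M.ground_finite.subset (hRA.1.trans hB.subset_ground)
  have hVfin : V.Finite :=
    M.ground_finite.subset ((subset_union_right).trans hAV.subset_ground)
  obtain ⟨B', hB'base, hB'sub, hB'sup⟩ := hAV.exists_isBase_subset_union_isBase hRA.2.2.1
  set RV := B' \ (A ∪ V) with hRV
  have hRVsub : RV ⊆ R A := by
    intro x hx
    rcases hB'sup hx.1 with h | h
    · exact absurd h hx.2
    · rcases h with h | h
      · exact absurd (Or.inl h) hx.2
      · exact h
  have hRVdisj : Disjoint RV V :=
    Set.disjoint_left.mpr fun x hx hxV => hx.2 (Or.inr hxV)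
  have hbase : M.IsBase (A ∪ V ∪ RV) := by
    have hset : A ∪ V ∪ RV = B' := by
      apply subset_antisymm
      · exact union_subset hB'sub diff_subset
      · intro x hx
        by_cases h : x ∈ A ∪ V
        · exact Or.inl h
        · exact Or.inr ⟨hx, h⟩
    rw [hset]; exact hB'base
  have hkey := key M w' hw'nonneg B hB R hR A V hdisj hAV V hVfin subset_rfl
    RV hRVsub hRVdisj hbase
  exact hkey.trans (wsum_mono hw'nonneg hRAfin diff_subset)
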